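/- Let A be an associative algebra over a field and h(u), e(u) series with h(u) ∈ 1 + u^{-1}A[[u^{-1}]] invertible, e(u) ∈ u^{-1}A[[u^{-1}]], satisfying (u-v)[e(u),e(v)] = c(e(v)-e(u))^2, (u-v)[e(u),h(v)] = h(v)(e(v)-e(u)), and with a second invertible series g(v) satisfying (u-v)[e(u), g(v)^{-1}] = c' (e(v)-e(u)) g(v)^{-1}. Then for all m ≥ 0: (u-v)[e(u), h(v)(e(v)-e(u))^m g(v)^{-1}] = (cm + 1 + c') h(v)(e(v)-e(u))^{m+1} g(v)^{-1}. -/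

import Mathlib

/-!
STATEMENT 13: Let `A` be an associative algebra over a field `k`, with series
`h(u) ∈ 1 + u⁻¹A[[u⁻¹]]`, `e(u) ∈ u⁻¹A[[u⁻¹]]` satisfying
`(u - v)[e(u), e(v)] = c (e(v) - e(u))^2` and
`(u - v)[e(u), h(v)] = h(v)(e(v) - e(u))`, and a second invertible series
`g(v)` (with inverse `g(v)⁻¹`) satisfying
`(u - v)[e(u), g(v)⁻¹] = c' (e(v) - e(u)) g(v)⁻¹`.  Then for all `m ≥ 0`:
`(u - v)[e(u), h(v)(e(v) - e(u))^m g(v)⁻¹]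
   = (cm + 1 + c') h(v)(e(v) - e(u))^{m+1} g(v)⁻¹`.

Laurent convention: `(u - v) * S = T` is encoded as
`(v⁻¹ - u⁻¹) * S = u⁻¹ * v⁻¹ * T` in `MvPowerSeries (Fin 2) A`
(variable `0` is `u⁻¹`, variable `1` is `v⁻¹`).
-/

noncomputable section

/-- The series `Σ_{r} f^{(r)} u^{-r}` viewed in `A[[u⁻¹, v⁻¹]]`, where the first
power-series variable (index `0`) plays the role of `u⁻¹` and the second
(index `1`) the role of `v⁻¹`. -/
def Useries {A : Type*} [Ring A] (f : ℕ → A) : MvPowerSeries (Fin 2) A :=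
  fun d => if d 1 = 0 then f (d 0) else 0

/-- The series `Σ_{r} f^{(r)} v^{-r}` viewed in `A[[u⁻¹, v⁻¹]]`. -/
def Vseries {A : Type*} [Ring A] (f : ℕ → A) : MvPowerSeries (Fin 2) A :=
  fun d => if d 0 = 0 then f (d 1) else 0

/-- `u⁻¹` as an element of `A[[u⁻¹, v⁻¹]]`. -/
def Xu {A : Type*} [Ring A] : MvPowerSeries (Fin 2) A := MvPowerSeries.X 0

/-- `v⁻¹` as an element of `A[[u⁻¹, v⁻¹]]`. -/
def Xv {A : Type*} [Ring A] : MvPowerSeries (Fin 2) A := MvPowerSeries.X 1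

theorem stmt13 {k A : Type*} [Field k] [Ring A] [Algebra k A]
    (c c' : k) (h e g ginv : ℕ → A) (hh0 : h 0 = 1) (he0 : e 0 = 0) (hg0 : g 0 = 1)
    (hginv1 : Vseries g * Vseries ginv = 1) (hginv2 : Vseries ginv * Vseries g = 1)
    (hee : (Xv - Xu) * ⁅Useries e, Vseries e⁆ =
      c • (Xu * Xv * (Vseries e - Useries e) ^ 2))
    (heh : (Xv - Xu) * ⁅Useries e, Vseries h⁆ =
      Xu * Xv * (Vseries h * (Vseries e - Useries e)))
    (heg : (Xv - Xu) * ⁅Useries e, Vseries ginv⁆ =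
      c' • (Xu * Xv * ((Vseries e - Useries e) * Vseries ginv)))
    (m : ℕ) :
    (Xv - Xu) * ⁅Useries e, Vseries h * (Vseries e - Useries e) ^ m * Vseries ginv⁆ =
      (c * (m : k) + 1 + c') •
        (Xu * Xv *
          (Vseries h * (Vseries e - Useries e) ^ (m + 1) * Vseries ginv)) := by
  set U := Useries e with hU
  set H := Vseries h with hH
  set G := Vseries ginv with hG
  set E := Vseries e - U with hE
  set w : MvPowerSeries (Fin 2) A := Xv - Xu with hw
  set s : MvPowerSeries (Fin 2) A := Xu * Xv with hs
  have hwc : ∀ x : MvPowerSeries (Fin 2) A, w * x = x * w := fun x =>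
    ((MvPowerSeries.commute_X x 1).sub_right (MvPowerSeries.commute_X x 0)).symm.eq
  have hsc : ∀ x : MvPowerSeries (Fin 2) A, s * x = x * s := fun x =>
    ((MvPowerSeries.commute_X x 0).mul_right (MvPowerSeries.commute_X x 1)).symm.eq
  have lmul : ∀ a b c : MvPowerSeries (Fin 2) A, ⁅a, b * c⁆ = ⁅a, b⁆ * c + b * ⁅a, c⁆ := by
    intro a b c
    simp only [Ring.lie_def]
    noncomm_ring
  -- key relation for E
  have heeE : w * ⁅U, E⁆ = c • (s * E ^ 2) := by
    rw [hE]; rw [hE] at hee; rw [← hee]; simp only [Ring.lie_def]; noncomm_ring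
  have hpow : ∀ n : ℕ, w * ⁅U, E ^ n⁆ = (c * n) • (s * E ^ (n + 1)) := by
    intro n
    induction n with
    | zero => simp [Ring.lie_def]
    | succ n ih =>
      rw [pow_succ', lmul, mul_add, ← mul_assoc, heeE, ← mul_assoc w E, hwc E,
        mul_assoc E, ih]
      have eq1 : s * E ^ 2 * E ^ n = s * E ^ (n + 2) := by
        rw [mul_assoc, ← pow_add, add_comm]
      have eq2 : E * (s * E ^ (n + 1)) = s * E ^ (n + 2) := by
        rw [← mul_assoc, ← hsc E, mul_assoc, ← pow_succ']
      rw [smul_mul_assoc, eq1, mul_smul_comm, eq2, ← add_smul]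
      congr 1
      push_cast
      ring
  rw [lmul, lmul, add_mul, mul_add, mul_add]
  have t1 : w * (⁅U, H⁆ * E ^ m * G) = s * (H * E ^ (m + 1) * G) := by
    rw [← mul_assoc w, ← mul_assoc w, heh, mul_assoc s, mul_assoc H, mul_assoc s,
      pow_succ', mul_assoc H]
  have t2 : w * (H * ⁅U, E ^ m⁆ * G) = (c * m) • (s * (H * E ^ (m + 1) * G)) := by
    rw [← mul_assoc w, ← mul_assoc w, hwc H, mul_assoc H, hpow m, mul_smul_comm,
      smul_mul_assoc]
    congr 1
    rw [← mul_assoc H s, ← hsc H, mul_assoc s H, mul_assoc s]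
  have t3 : w * (H * E ^ m * ⁅U, G⁆) = c' • (s * (H * E ^ (m + 1) * G)) := by
    rw [← mul_assoc w, hwc (H * E ^ m), mul_assoc, heg, mul_smul_comm]
    congr 1
    rw [← mul_assoc (H * E ^ m) s, ← hsc (H * E ^ m), mul_assoc s (H * E ^ m),
      ← mul_assoc (H * E ^ m) E, mul_assoc H (E ^ m) E, ← pow_succ]
  rw [t1, t2, t3, add_smul, add_smul, one_smul]
  abel
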